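/- Let K be a p-core CRG at p = 1/4 all of whose vertices are black, all of whose edges are white or gray, and whose gray edges form a linear forest (disjoint union of paths). Let μ be the fully supported optimizer with stationarity condition: for every vertex v, 2μ(v) + 1 − 4g = Σ_{u ∈ NG(v)} μ(u), where g = g_K(1/4) and NG(v) is the gray-neighborhood of v. Then g > 1/4. -/
import Mathlib


open Finset

inductive EColor | white | black | gray
deriving DecidableEq

/-- The `p`-weight of an edge color: `p` for white, `1-p` for black, `0` for gray. -/
def wval (p : ℝ) : EColor → ℝ
  | .white => p
  | .black => 1 - p
  | .gray => 0

/-- The matrix `M_K(p)` of a CRG given by vertex colors `vb` (`true` = black)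
and edge colors `ec`. -/
def Mmat {V : Type*} [DecidableEq V] (vb : V → Bool) (ec : V → V → EColor) (p : ℝ)
    (x y : V) : ℝ :=
  if x = y then (if vb x then 1 - p else p) else wval p (ec x y)

/-- `μ` is a probability mass. -/
def IsProb {V : Type*} [Fintype V] (μ : V → ℝ) : Prop :=
  (∀ x, 0 ≤ μ x) ∧ ∑ x, μ x = 1

/-- The quadratic form `⟨μ, M_K(p) μ⟩`. -/
def QF {V : Type*} [Fintype V] [DecidableEq V] (vb : V → Bool) (ec : V → V → EColor)
    (p : ℝ) (μ : V → ℝ) : ℝ :=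
  ∑ x, ∑ y, μ x * Mmat vb ec p x y * μ y

/-- `g` is the minimum of the quadratic form over probability masses, i.e. `g = g_K(p)`. -/
def gIs {V : Type*} [Fintype V] [DecidableEq V] (vb : V → Bool) (ec : V → V → EColor)
    (p g : ℝ) : Prop :=
  IsLeast {t | ∃ μ : V → ℝ, IsProb μ ∧ t = QF vb ec p μ} g

/-- The weighted gray-degree `d_G(u) = ∑_{v : uv gray} μ(v)`. -/
def grayDeg {V : Type*} [Fintype V] [DecidableEq V] (ec : V → V → EColor) (μ : V → ℝ)
    (u : V) : ℝ :=
  ∑ v ∈ Finset.univ.filter (fun v => v ≠ u ∧ ec u v = EColor.gray), μ v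

/-- let `K` be a `1/4`-core CRG with all vertices black, all edges white or
gray, whose gray edges form a linear forest (gray-degrees ≤ 2, and some vertex has
gray-degree ≤ 1).  If the fully supported optimizer `μ` satisfies the stationarity
equation `2μ(v) + 1 − 4g = ∑_{u ∈ NG(v)} μ(u)` for every `v`, then `g > 1/4`. -/
theorem stmt9 {V : Type*} [Fintype V] [DecidableEq V] [Nonempty V]
    (ec : V → V → EColor) (hsymm : ∀ a b, ec a b = ec b a)
    (hnb : ∀ x y, x ≠ y → ec x y ≠ EColor.black)
    (hdeg : ∀ v, ((Finset.univ.filter fun u => u ≠ v ∧ ec v u = EColor.gray)).card ≤ 2)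
    (hend : ∃ v, ((Finset.univ.filter fun u => u ≠ v ∧ ec v u = EColor.gray)).card ≤ 1)
    (μ : V → ℝ) (g : ℝ) (hμ : IsProb μ) (hfull : ∀ v, 0 < μ v)
    (hstat : ∀ v, 2 * μ v + 1 - 4 * g =
      ∑ u ∈ Finset.univ.filter (fun u => u ≠ v ∧ ec v u = EColor.gray), μ u) :
    1 / 4 < g := by
  obtain ⟨hpos, hμsum⟩ := hμ
  by_contra hg
  push_neg at hg
  -- Step 1: g ≥ 1/4, via a vertex maximizing μ
  obtain ⟨w, -, hw⟩ := Finset.exists_max_image Finset.univ μ ⟨Classical.arbitrary V, mem_univ _⟩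
  have hle : ∑ u ∈ Finset.univ.filter (fun u => u ≠ w ∧ ec w u = EColor.gray), μ u ≤ 2 * μ w := by
    calc ∑ u ∈ Finset.univ.filter (fun u => u ≠ w ∧ ec w u = EColor.gray), μ u
        ≤ ∑ _u ∈ Finset.univ.filter (fun u => u ≠ w ∧ ec w u = EColor.gray), μ w :=
          Finset.sum_le_sum (fun u _ => hw u (mem_univ u))
      _ = ((Finset.univ.filter (fun u => u ≠ w ∧ ec w u = EColor.gray)).card : ℝ) * μ w := by
          rw [Finset.sum_const, nsmul_eq_mul]
      _ ≤ 2 * μ w := by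
          have h1 : ((Finset.univ.filter (fun u => u ≠ w ∧ ec w u = EColor.gray)).card : ℝ) ≤ 2 := by
            exact_mod_cast hdeg w
          nlinarith [(hfull w).le]
  have hgeq : g = 1 / 4 := by
    have := hstat w
    linarith
  have h4g : 4 * g = 1 := by rw [hgeq]; ring
  -- Step 2: sum stationarity over all vertices
  have hsum : ∑ v, ∑ u ∈ Finset.univ.filter (fun u => u ≠ v ∧ ec v u = EColor.gray), μ u = 2 := by
    have : ∑ v, (2 * μ v + 1 - 4 * g)
        = ∑ v, ∑ u ∈ Finset.univ.filter (fun u => u ≠ v ∧ ec v u = EColor.gray), μ u :=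
      Finset.sum_congr rfl (fun v _ => hstat v)
    rw [← this]
    rw [h4g]
    rw [show (fun v => 2 * μ v + 1 - 1) = (fun v => 2 * μ v) by funext v; ring]
    rw [← Finset.mul_sum, hμsum]; ring
  -- Swap the double sum
  have hswap : ∑ v, ∑ u ∈ Finset.univ.filter (fun u => u ≠ v ∧ ec v u = EColor.gray), μ u
      = ∑ u, μ u * ((Finset.univ.filter (fun v => v ≠ u ∧ ec u v = EColor.gray)).card : ℝ) := by
    simp_rw [Finset.sum_filter]
    rw [Finset.sum_comm]
    refine Finset.sum_congr rfl (fun u _ => ?_)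
    have hcond : ∀ v, (u ≠ v ∧ ec v u = EColor.gray) ↔ (v ≠ u ∧ ec u v = EColor.gray) := by
      intro v
      rw [ne_comm, hsymm u v]
    calc ∑ v, (if u ≠ v ∧ ec v u = EColor.gray then μ u else 0)
        = ∑ v, (if v ≠ u ∧ ec u v = EColor.gray then μ u else 0) := by
          refine Finset.sum_congr rfl (fun v _ => ?_)
          simp_rw [hcond v]
      _ = ∑ v ∈ Finset.univ.filter (fun v => v ≠ u ∧ ec u v = EColor.gray), μ u := by
          rw [Finset.sum_filter]
      _ = μ u * ((Finset.univ.filter (fun v => v ≠ u ∧ ec u v = EColor.gray)).card : ℝ) := by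
          rw [Finset.sum_const, nsmul_eq_mul]; ring
  -- Strict bound using the endpoint vertex
  obtain ⟨v₀, hv₀⟩ := hend
  have hstrict : ∑ u, μ u * ((Finset.univ.filter (fun v => v ≠ u ∧ ec u v = EColor.gray)).card : ℝ)
      < ∑ u, 2 * μ u := by
    refine Finset.sum_lt_sum (fun u _ => ?_) ⟨v₀, mem_univ v₀, ?_⟩
    · have h1 : ((Finset.univ.filter (fun v => v ≠ u ∧ ec u v = EColor.gray)).card : ℝ) ≤ 2 := by
        exact_mod_cast hdeg u
      nlinarith [(hfull u).le]
    · have h1 : ((Finset.univ.filter (fun v => v ≠ v₀ ∧ ec v₀ v = EColor.gray)).card : ℝ) ≤ 1 := by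
        exact_mod_cast hv₀
      nlinarith [hfull v₀]
  rw [hswap] at hsum
  rw [← Finset.mul_sum, hμsum, mul_one] at hstrict
  linarith
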